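/- Let ∅ = F_0 ⊂ F_1 ⊂ ⋯ ⊂ F_k ⊂ F_{k+1} = E be a chain of flats of M and let x be a fractional matching in (M, L) satisfying ∑_{l∈L} a(F_i)_l x_l = r(F_i) for every i = 1,…,k. Then for every choice of sets S_0,…,S_k with S_i ⊆ F_{i+1} \ F_i and S_i ∪ F_i a flat of M for each i, the inequality ∑_{l∈L} a(S_0 ∪ ⋯ ∪ S_k)_l x_l ≤ ∑_{i=0}^{k} (r(S_i ∪ F_i) − r(F_i)) holds. (A fractional matching in M that is tight on every flat of the chain is a fractional matching in M⋆𝓕 := ⊕_{i=0}^{k} (M|F_{i+1})/F_i.) -/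

import Mathlib

open Set

variable {α : Type*}

/-- The rank of a set in a matroid: the supremum of the cardinalities of its
independent subsets. -/
noncomputable def Matroid.rk' (M : Matroid α) (X : Set α) : ℕ :=
  sSup {n : ℕ | ∃ I, M.Indep I ∧ I ⊆ X ∧ I.ncard = n}

/-- A matroid is loopless if the closure of the empty set is empty. -/
def Matroid.Loopless' (M : Matroid α) : Prop := M.closure ∅ = ∅

/-- A line of a matroid: a subset of the ground set of rank 1 or 2. -/
def Matroid.IsLine (M : Matroid α) (l : Set α) : Prop :=
  l ⊆ M.E ∧ (M.rk' l = 1 ∨ M.rk' l = 2)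

open scoped Classical in
/-- Degree `a(X)_l` of a set `X` at a line `l`. -/
noncomputable def deg (X l : Set α) : ℕ :=
  if X ∩ l = ∅ then 0 else if l ⊆ X then 2 else 1

/-- A fractional matching of the pair `(M, L)`. -/
def IsFracMatching (M : Matroid α) (L : Finset (Set α)) (x : Set α → ℝ) : Prop :=
  (∀ l ∈ L, 0 ≤ x l) ∧
  ∀ F : Set α, M.IsFlat F → ∑ l ∈ L, (deg F l : ℝ) * x l ≤ (M.rk' F : ℝ)

/-- `a(y)_l` for a finitely supported `y` on flats. -/
noncomputable def aDual (y : Set α →₀ ℝ) (l : Set α) : ℝ :=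
  y.sum fun F c => c * (deg F l : ℝ)

/-- `r(y)` for a finitely supported `y` on flats. -/
noncomputable def rDual (M : Matroid α) (y : Set α →₀ ℝ) : ℝ :=
  y.sum fun F c => c * (M.rk' F : ℝ)

lemma rk'_empty (M : Matroid α) : M.rk' ∅ = 0 := by
  have : {n : ℕ | ∃ I, M.Indep I ∧ I ⊆ (∅ : Set α) ∧ I.ncard = n} = {0} := by
    ext n
    simp only [mem_setOf_eq, mem_singleton_iff]
    constructor
    · rintro ⟨I, -, hI, rfl⟩
      simp [subset_empty_iff.mp hI]
    · rintro rfl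
      exact ⟨∅, M.empty_indep, by simp⟩
  rw [Matroid.rk', this, csSup_singleton]

lemma ncard_le_rk' {M : Matroid α} {I X : Set α} (hI : M.Indep I) (hIX : I ⊆ X)
    (hX : M.rk' X ≠ 0) : I.ncard ≤ M.rk' X := by
  by_cases hbdd : BddAbove {n : ℕ | ∃ I, M.Indep I ∧ I ⊆ X ∧ I.ncard = n}
  · exact le_csSup hbdd ⟨I, hI, hIX, rfl⟩
  · exact absurd (by rw [Matroid.rk', csSup_of_not_bddAbove hbdd, csSup_empty]; rfl) hX

/-- Key geometric lemma: a line with a point in a flat `T` and a point of `G \ T`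
(for a flat `G ⊇ T`) is contained in `G`. -/
lemma line_subset_flat {M : Matroid α} (hM : M.Loopless') {l T G : Set α}
    (hl : M.IsLine l) (hT : M.IsFlat T) (hG : M.IsFlat G) (hTG : T ⊆ G)
    {p q : α} (hpl : p ∈ l) (hpT : p ∈ T) (hql : q ∈ l) (hqT : q ∉ T) (hqG : q ∈ G) :
    l ⊆ G := by
  have hlE : l ⊆ M.E := hl.1
  have hpq : p ≠ q := fun h => hqT (h ▸ hpT)
  have hp : M.Indep {p} := by
    rw [show ({p} : Set α) = insert p ∅ by simp,
      M.empty_indep.insert_indep_iff_of_notMem (notMem_empty p), hM]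
    exact ⟨hlE hpl, notMem_empty p⟩
  have hqcl : q ∉ M.closure {p} := fun h =>
    hqT ((hT.closure ▸ M.closure_subset_closure (singleton_subset_iff.mpr hpT)) h)
  have hpqI : M.Indep {q, p} := by
    rw [show ({q, p} : Set α) = insert q {p} from rfl,
      hp.insert_indep_iff_of_notMem (by simp [Ne.symm hpq])]
    exact ⟨hlE hql, hqcl⟩
  have hrk2 : M.rk' l ≤ 2 := by rcases hl.2 with h | h <;> omega
  have hrkne : M.rk' l ≠ 0 := by rcases hl.2 with h | h <;> omega
  intro e hel
  by_cases he : e ∈ ({q, p} : Set α)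
  · rcases he with h | h
    · exact h ▸ hqG
    · exact h ▸ hTG hpT
  have hnotind : ¬ M.Indep (insert e {q, p}) := by
    intro hind
    have h3 : (insert e {q, p} : Set α).ncard = 3 := by
      rw [ncard_insert_of_notMem he (by simp : ({q, p} : Set α).Finite),
        ncard_pair (Ne.symm hpq)]
    have := ncard_le_rk' hind (by
      rw [insert_subset_iff, pair_subset_iff]; exact ⟨hel, hql, hpl⟩) hrkne
    omega
  have : e ∈ M.closure {q, p} := by
    by_contra hecl
    exact hnotind (hpqI.insert_indep_iff_of_notMem he |>.mpr ⟨hlE hel, hecl⟩)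
  have hsub : M.closure {q, p} ⊆ G := by
    have := M.closure_subset_closure (pair_subset hqG (hTG hpT))
    rwa [hG.closure] at this
  exact hsub this

lemma deg_mono {X Y l : Set α} (h : X ⊆ Y) : deg X l ≤ deg Y l := by
  classical
  unfold deg
  by_cases h1 : X ∩ l = ∅
  · simp only [if_pos h1]; positivity
  have h2 : ¬ (Y ∩ l = ∅) :=
    fun hy => h1 (eq_empty_of_subset_empty ((inter_subset_inter_left l h).trans hy.subset))
  rw [if_neg h1, if_neg h2]
  by_cases h3 : l ⊆ X
  · rw [if_pos h3, if_pos (h3.trans h)]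
  · rw [if_neg h3]; split_ifs <;> omega

lemma deg_le_two (X l : Set α) : deg X l ≤ 2 := by
  unfold deg; split_ifs <;> omega

lemma deg_eq_zero_iff {X l : Set α} : deg X l = 0 ↔ X ∩ l = ∅ := by
  unfold deg; split_ifs <;> simp_all

lemma deg_eq_two_of {X l : Set α} (h : l ⊆ X) (hne : l.Nonempty) : deg X l = 2 := by
  have h1 : X ∩ l ≠ ∅ := by
    obtain ⟨a, ha⟩ := hne
    exact (Set.nonempty_of_mem (Set.mem_inter (h ha) ha)).ne_empty
  unfold deg
  rw [if_neg h1, if_pos h]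

lemma deg_eq_one_of {X l : Set α} (h : (X ∩ l).Nonempty) (h2 : ¬ l ⊆ X) : deg X l = 1 := by
  unfold deg
  rw [if_neg h.ne_empty, if_neg h2]

lemma one_le_deg_of {X l : Set α} (h : (X ∩ l).Nonempty) : 1 ≤ deg X l := by
  unfold deg
  rw [if_neg h.ne_empty]; split_ifs <;> omega

lemma subset_of_deg_eq_two {X l : Set α} (h : deg X l = 2) : l ⊆ X := by
  unfold deg at h; split_ifs at h with h1 h2
  · exact h2
  · exact absurd h (by omega)

/-- Pointwise inequality on degrees. -/
lemma deg_pointwise (M : Matroid α) (hM : M.Loopless') {l : Set α} (hl : M.IsLine l)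
    (k : ℕ) (F S : ℕ → Set α)
    (hFflat : ∀ i ≤ k+1, M.IsFlat (F i)) (hFmono : ∀ i j, i ≤ j → j ≤ k+1 → F i ⊆ F j)
    (hS : ∀ i ≤ k, S i ⊆ F (i+1) \ F i ∧ M.IsFlat (S i ∪ F i)) :
    (deg (⋃ i ∈ Finset.range (k+1), S i) l : ℝ)
      ≤ ∑ i ∈ Finset.range (k+1), ((deg (S i ∪ F i) l : ℝ) - deg (F i) l) := by
  classical
  set U := ⋃ i ∈ Finset.range (k+1), S i with hU
  have hterm : ∀ i ∈ Finset.range (k+1),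
      (0 : ℝ) ≤ (deg (S i ∪ F i) l : ℝ) - deg (F i) l := by
    intro i _
    have := deg_mono (l := l) (subset_union_right (s := S i) (t := F i))
    simp only [sub_nonneg]
    exact_mod_cast this
  by_cases hUl : U ∩ l = ∅
  · rw [deg_eq_zero_iff.mpr hUl]
    exact_mod_cast Finset.sum_nonneg hterm
  -- U ∩ l nonempty
  have hUex : ∃ i, i ≤ k ∧ (S i ∩ l).Nonempty := by
    obtain ⟨a, haU, hal⟩ := nonempty_iff_ne_empty.mpr hUl
    simp only [hU, mem_iUnion, Finset.mem_range] at haU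
    obtain ⟨i, hik, hai⟩ := haU
    exact ⟨i, by omega, a, hai, hal⟩
  set i₀ := Nat.find hUex with hi₀def
  obtain ⟨hi₀k, q, hqS, hql⟩ := Nat.find_spec hUex
  have hmin : ∀ j < i₀, (S j ∩ l) = ∅ := by
    intro j hj
    by_contra hne
    exact Nat.find_min hUex hj ⟨by omega, nonempty_iff_ne_empty.mpr hne⟩
  have hqF : q ∉ F i₀ := ((hS i₀ hi₀k).1 hqS).2
  have hqF1 : q ∈ F (i₀+1) := ((hS i₀ hi₀k).1 hqS).1
  have hGflat := (hS i₀ hi₀k).2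
  have hlne : l.Nonempty := ⟨q, hql⟩
  have hi₀mem : i₀ ∈ Finset.range (k+1) := Finset.mem_range.mpr (by omega)
  -- `l ⊆ U → deg U ≤ 1` in case F i₀ meets l is handled inside case A
  by_cases hFl : (F i₀ ∩ l).Nonempty
  · -- Case A
    obtain ⟨p, hpF, hpl⟩ := hFl
    have hlG : l ⊆ S i₀ ∪ F i₀ :=
      line_subset_flat hM hl (hFflat i₀ (by omega)) hGflat subset_union_right
        hpl hpF hql hqF (Or.inl hqS)
    have hdG : deg (S i₀ ∪ F i₀) l = 2 := deg_eq_two_of hlG hlne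
    have hdF : deg (F i₀) l = 1 := deg_eq_one_of ⟨p, hpF, hpl⟩ (fun h => hqF (h hql))
    have hdU : deg U l ≤ 1 := by
      by_contra hd
      have h2 : deg U l = 2 := by have := deg_le_two U l; omega
      have hlU : l ⊆ U := subset_of_deg_eq_two h2
      have hpU := hlU hpl
      simp only [hU, mem_iUnion, Finset.mem_range] at hpU
      obtain ⟨j, hjk, hpj⟩ := hpU
      by_cases hji : j < i₀
      · have hc : p ∈ S j ∩ l := Set.mem_inter hpj hpl
        rw [hmin j hji] at hc
        exact hc
      · exact ((hS j (by omega)).1 hpj).2 (hFmono i₀ j (by omega) (by omega) hpF)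
    calc (deg U l : ℝ) ≤ 1 := by exact_mod_cast hdU
      _ = (deg (S i₀ ∪ F i₀) l : ℝ) - deg (F i₀) l := by rw [hdG, hdF]; norm_num
      _ ≤ _ := Finset.single_le_sum hterm hi₀mem
  · -- Case B : F i₀ ∩ l = ∅
    have hFl0 : deg (F i₀) l = 0 := deg_eq_zero_iff.mpr (not_nonempty_iff_eq_empty.mp hFl)
    have hG1 : 1 ≤ deg (S i₀ ∪ F i₀) l := one_le_deg_of ⟨q, Or.inl hqS, hql⟩
    by_cases hdU : deg U l ≤ 1
    · calc (deg U l : ℝ) ≤ 1 := by exact_mod_cast hdU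
        _ ≤ (deg (S i₀ ∪ F i₀) l : ℝ) - deg (F i₀) l := by
            rw [hFl0]
            push_cast
            have : (1 : ℝ) ≤ (deg (S i₀ ∪ F i₀) l : ℝ) := by exact_mod_cast hG1
            linarith
        _ ≤ _ := Finset.single_le_sum hterm hi₀mem
    · have h2 : deg U l = 2 := by have := deg_le_two U l; omega
      have hlU : l ⊆ U := subset_of_deg_eq_two h2
      by_cases hlG : l ⊆ S i₀ ∪ F i₀
      · calc (deg U l : ℝ) = 2 := by exact_mod_cast h2
          _ = (deg (S i₀ ∪ F i₀) l : ℝ) - deg (F i₀) l := by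
              rw [deg_eq_two_of hlG hlne, hFl0]; norm_num
          _ ≤ _ := Finset.single_le_sum hterm hi₀mem
      · obtain ⟨e, hel, heG⟩ := not_subset.mp hlG
        have heU := hlU hel
        simp only [hU, mem_iUnion, Finset.mem_range] at heU
        obtain ⟨j, hjk1, hej⟩ := heU
        have hjk : j ≤ k := by omega
        have hji : i₀ < j := by
          rcases Nat.lt_trichotomy j i₀ with h | h | h
          · have hc : e ∈ S j ∩ l := Set.mem_inter hej hel
            rw [hmin j h] at hc
            exact absurd hc (notMem_empty e)
          · exact absurd (Or.inl (h ▸ hej)) heG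
          · exact h
        have hqFj : q ∈ F j := hFmono (i₀+1) j (by omega) (by omega) hqF1
        have heFj : e ∉ F j := ((hS j hjk).1 hej).2
        have hlGj : l ⊆ S j ∪ F j :=
          line_subset_flat hM hl (hFflat j (by omega)) (hS j hjk).2 subset_union_right
            hql hqFj hel heFj (Or.inl hej)
        have hdGj : deg (S j ∪ F j) l = 2 := deg_eq_two_of hlGj hlne
        have hdFj : deg (F j) l = 1 := deg_eq_one_of ⟨q, hqFj, hql⟩ (fun h => heFj (h hel))
        have hpair : ({i₀, j} : Finset ℕ) ⊆ Finset.range (k+1) := by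
          intro a ha
          simp only [Finset.mem_insert, Finset.mem_singleton] at ha
          rcases ha with rfl | rfl <;> exact Finset.mem_range.mpr (by omega)
        have hij : i₀ ≠ j := by omega
        calc (deg U l : ℝ) = 2 := by exact_mod_cast h2
          _ ≤ ((deg (S i₀ ∪ F i₀) l : ℝ) - deg (F i₀) l)
              + ((deg (S j ∪ F j) l : ℝ) - deg (F j) l) := by
              rw [hFl0, hdGj, hdFj]
              push_cast
              have : (1 : ℝ) ≤ (deg (S i₀ ∪ F i₀) l : ℝ) := by exact_mod_cast hG1
              linarith
          _ = ∑ i ∈ ({i₀, j} : Finset ℕ), ((deg (S i ∪ F i) l : ℝ) - deg (F i) l) := by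
              rw [Finset.sum_insert (by simpa using hij), Finset.sum_singleton]
          _ ≤ _ := Finset.sum_le_sum_of_subset_of_nonneg hpair
              (fun i hi _ => hterm i hi)

/-- a fractional matching of `(M, L)` that is tight on all flats of the
chain is a fractional matching of `(M⋆𝓕, L)`. -/
theorem stmt_9 (M : Matroid α) [M.RankFinite] (hM : M.Loopless')
    (L : Finset (Set α)) (hL : ∀ l ∈ L, M.IsLine l)
    (k : ℕ) (F : ℕ → Set α) (hF0 : F 0 = ∅) (hFE : F (k+1) = M.E)
    (hFflat : ∀ i ≤ k+1, M.IsFlat (F i)) (hFmono : ∀ i ≤ k, F i ⊂ F (i+1))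
    (x : Set α → ℝ) (hx : IsFracMatching M L x)
    (htight : ∀ i, 1 ≤ i → i ≤ k →
      ∑ l ∈ L, (deg (F i) l : ℝ) * x l = (M.rk' (F i) : ℝ)) :
    ∀ S : ℕ → Set α,
      (∀ i ≤ k, S i ⊆ F (i+1) \ F i ∧ M.IsFlat (S i ∪ F i)) →
      ∑ l ∈ L, (deg (⋃ i ∈ Finset.range (k+1), S i) l : ℝ) * x l
        ≤ ∑ i ∈ Finset.range (k+1), ((M.rk' (S i ∪ F i) : ℝ) - (M.rk' (F i) : ℝ)) := by
  intro S hS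
  have hFmono' : ∀ i j, i ≤ j → j ≤ k+1 → F i ⊆ F j := by
    have key : ∀ n, n ≤ k+1 → ∀ i, i ≤ n → F i ⊆ F n := by
      intro n
      induction n with
      | zero => intro _ i hi; rw [Nat.le_zero.mp hi]
      | succ m ih =>
        intro hn i hi
        rcases Nat.lt_or_ge i (m+1) with h | h
        · exact ((ih (by omega) i (by omega)).trans (hFmono m (by omega)).subset)
        · rw [Nat.le_antisymm hi h]
    exact fun i j hij hjk => key j hjk i hij
  have step1 : ∑ l ∈ L, (deg (⋃ i ∈ Finset.range (k+1), S i) l : ℝ) * x l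
      ≤ ∑ l ∈ L, (∑ i ∈ Finset.range (k+1),
          ((deg (S i ∪ F i) l : ℝ) - deg (F i) l)) * x l := by
    refine Finset.sum_le_sum fun l hl' => ?_
    exact mul_le_mul_of_nonneg_right
      (deg_pointwise M hM (hL l hl') k F S hFflat hFmono' hS) (hx.1 l hl')
  have step2 : ∑ l ∈ L, (∑ i ∈ Finset.range (k+1),
          ((deg (S i ∪ F i) l : ℝ) - deg (F i) l)) * x l
      = ∑ i ∈ Finset.range (k+1),
          ((∑ l ∈ L, (deg (S i ∪ F i) l : ℝ) * x l)
            - ∑ l ∈ L, (deg (F i) l : ℝ) * x l) := by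
    simp_rw [Finset.sum_mul, sub_mul]
    rw [Finset.sum_comm]
    simp_rw [Finset.sum_sub_distrib]
  have step3 : ∑ i ∈ Finset.range (k+1),
          ((∑ l ∈ L, (deg (S i ∪ F i) l : ℝ) * x l)
            - ∑ l ∈ L, (deg (F i) l : ℝ) * x l)
      ≤ ∑ i ∈ Finset.range (k+1), ((M.rk' (S i ∪ F i) : ℝ) - (M.rk' (F i) : ℝ)) := by
    refine Finset.sum_le_sum fun i hi => ?_
    have hik : i ≤ k := by simpa [Nat.lt_succ_iff] using Finset.mem_range.mp hi
    have hA : ∑ l ∈ L, (deg (S i ∪ F i) l : ℝ) * x l ≤ (M.rk' (S i ∪ F i) : ℝ) :=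
      hx.2 _ (hS i hik).2
    have hB : ∑ l ∈ L, (deg (F i) l : ℝ) * x l = (M.rk' (F i) : ℝ) := by
      rcases Nat.eq_zero_or_pos i with rfl | hpos
      · rw [hF0, rk'_empty]
        have : ∀ l ∈ L, (deg (∅ : Set α) l : ℝ) * x l = 0 := by
          intro l _
          rw [deg_eq_zero_iff.mpr (by simp)]
          simp
        rw [Finset.sum_congr rfl this]
        simp
      · exact htight i hpos hik
    linarith
  calc _ ≤ _ := step1
    _ = _ := step2
    _ ≤ _ := step3
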